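/- arXiv:2504.11594 — 4 statements merged into one kernel-verified Lean document; each statement's English description precedes it below -/
import Mathlib

section
/- (Hartman–Stampacchia lemma, as applied in the paper.) Let N ≥ 1, C > 0, r₀ ∈ ℝ, and let Θ : [r₀, ∞) → [0, ∞) be a nonincreasing, locally absolutely continuous function satisfying the differential inequality Θ(q) ≤ C(−Θ'(q))^{(N+1)/N} for almost every q > r₀. Then Θ(q) = 0 for every q > r₀ + (N+1) C^{N/(N+1)} Θ(r₀)^{1/(N+1)}. -/
open MeasureTheory Filter Metric Set
open scoped RealInnerProductSpace NNReal Topology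

noncomputable section

/-- `ℝ^N`. -/
abbrev En (N : ℕ) := EuclideanSpace ℝ (Fin N)

variable {N : ℕ}

/-- Hypothesis (F1): `f ≥ 0` and `f 0 = 0`. -/
def SatisfiesF1 (f : En N → ℝ) : Prop :=
  (∀ ξ, 0 ≤ f ξ) ∧ f 0 = 0

/-- Hypothesis (F3): uniform convexity with constant `ε` whenever `‖ξ‖ > r + 1`. -/
def SatisfiesF3 (f : En N → ℝ) (r ε : ℝ) : Prop :=
  ∀ ξ ζ : En N, r + 1 < ‖ξ‖ → ∀ θ ∈ Set.Icc (0:ℝ) 1,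
    f (θ • ξ + (1 - θ) • ζ) ≤ θ * f ξ + (1 - θ) * f ζ - ε / 2 * (θ * (1 - θ) * ‖ξ - ζ‖ ^ 2)

/-- Variant (F*3): uniform convexity with constant `ε` whenever `‖ζ‖ > r + 1`. -/
def SatisfiesF3ζ (f : En N → ℝ) (r ε : ℝ) : Prop :=
  ∀ ξ ζ : En N, r + 1 < ‖ζ‖ → ∀ θ ∈ Set.Icc (0:ℝ) 1,
    f (θ • ξ + (1 - θ) • ζ) ≤ θ * f ξ + (1 - θ) * f ζ - ε / 2 * (θ * (1 - θ) * ‖ξ - ζ‖ ^ 2)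

/-- `μ`-uniform convexity everywhere. -/
def UnifConvex (f : En N → ℝ) (μ : ℝ) : Prop :=
  ∀ ξ ζ : En N, ∀ θ ∈ Set.Icc (0:ℝ) 1,
    f (θ • ξ + (1 - θ) • ζ) ≤ θ * f ξ + (1 - θ) * f ζ - μ / 2 * (θ * (1 - θ) * ‖ξ - ζ‖ ^ 2)

/-- `Ω` is an `R`-uniformly convex set. -/
def UniformlyConvexSet (Ω : Set (En N)) (R : ℝ) : Prop :=
  ∀ γ ∈ frontier Ω, ∃ b : En N, ‖b‖ = 1 ∧
    ∀ γ' ∈ frontier Ω, (1 / 2) * ‖γ' - γ‖ ^ 2 ≤ R * (inner ℝ b (γ' - γ) : ℝ)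

/-- `φ` satisfies the lower bounded slope condition of rank `M` on `∂Ω`. -/
def LowerBoundedSlope (Ω : Set (En N)) (φ : En N → ℝ) (M : ℝ) : Prop :=
  0 ≤ M ∧ ∀ γ ∈ frontier Ω, ∃ z : En N, ‖z‖ ≤ M ∧
    ∀ γ' ∈ frontier Ω, φ γ + (inner ℝ z (γ' - γ) : ℝ) ≤ φ γ'

/-- Membership in `W^{1,1}(Ω)` (modelled via the pointwise a.e. gradient). -/
def MemW11 (Ω : Set (En N)) (u : En N → ℝ) : Prop :=
  IntegrableOn u Ω ∧ IntegrableOn (fun x => ‖gradient u x‖) Ω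

/-- Membership in the Dirichlet class `φ + W^{1,1}_0(Ω)`:
`u ∈ W^{1,1}(Ω)` and `u = φ` on `∂Ω`. -/
def MemClass (Ω : Set (En N)) (φ u : En N → ℝ) : Prop :=
  MemW11 Ω u ∧ Set.EqOn u φ (frontier Ω)

/-- The functional `I(u) = ∫_Ω [f(∇u) + g u] dx`. -/
def funcI (Ω : Set (En N)) (f : En N → ℝ) (g u : En N → ℝ) : ℝ :=
  ∫ x in Ω, (f (gradient u x) + g x * u x)

/-- `u` is a minimizer of `I` in the class `φ + W^{1,1}_0(Ω)`. -/
def IsMinimizer (Ω : Set (En N)) (f : En N → ℝ) (g φ u : En N → ℝ) : Prop :=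
  MemClass Ω φ u ∧ ∀ v, MemClass Ω φ v → funcI Ω f g u ≤ funcI Ω f g v

/-- `u` is locally Lipschitz continuous in the open set `Ω`. -/
def LocLipschitzOn (Ω : Set (En N)) (u : En N → ℝ) : Prop :=
  ∀ x ∈ Ω, ∃ K : ℝ≥0, ∃ s ∈ 𝓝 x, s ⊆ Ω ∧ LipschitzOnWith K u s

/-- `fs` is the convexification `f**` of `f`: the greatest convex function `≤ f`. -/
def IsConvexification (f fs : En N → ℝ) : Prop :=
  ConvexOn ℝ Set.univ fs ∧ (∀ x, fs x ≤ f x) ∧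
    ∀ h : En N → ℝ, ConvexOn ℝ Set.univ h → (∀ x, h x ≤ f x) → ∀ x, h x ≤ fs x

/-- Superlinearity: `f ξ / ‖ξ‖ → ∞` as `‖ξ‖ → ∞`. -/
def Superlinear (f : En N → ℝ) : Prop :=
  Tendsto (fun ξ => f ξ / ‖ξ‖) (comap norm atTop) atTop

/-- The (real-valued) polar `f*` of `f`. -/
def polarReal (f : En N → ℝ) (ξ : En N) : ℝ :=
  sSup (Set.range fun x => (inner ℝ x ξ : ℝ) - f x)

/-- The auxiliary function `ω_α(x) = (N/α) f*(α (x - x₀)/N)`. -/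
def omegaFun (f : En N → ℝ) (x₀ : En N) (α : ℝ) (x : En N) : ℝ :=
  ((N : ℝ) / α) * polarReal f ((α / (N : ℝ)) • (x - x₀))


private lemma concave_step {β : ℝ} (hβ0 : 0 < β) (hβ1 : β ≤ 1) {Y d : ℝ}
    (hY : 0 < Y) (hd : 0 ≤ d) :
    Y ^ β + β * d * (Y + d) ^ (β - 1) ≤ (Y + d) ^ β := by
  set u : ℝ := Y + d with hu_def
  have hu : 0 < u := by positivity
  have hw1 : d / u ≤ 1 := (div_le_one hu).2 (by linarith)
  have hw0 : 0 ≤ d / u := div_nonneg hd hu.le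
  have hb : (1 + -(d / u)) ^ β ≤ 1 + β * -(d / u) :=
    rpow_one_add_le_one_add_mul_self (by linarith) hβ0.le hβ1
  have h2 : 1 + -(d / u) = Y / u := by field_simp; linarith
  have h3 : Y ^ β = u ^ β * (Y / u) ^ β := by
    rw [← Real.mul_rpow hu.le (div_nonneg hY.le hu.le)]
    congr 1
    field_simp
  have h4 : Y ^ β ≤ u ^ β * (1 + β * -(d / u)) := by
    rw [h3]
    exact mul_le_mul_of_nonneg_left (h2 ▸ hb) (Real.rpow_nonneg hu.le β)
  have h5 : u ^ (β - 1) = u ^ β / u := by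
    rw [Real.rpow_sub hu, Real.rpow_one]
  have h6 : u ^ β * (1 + β * -(d / u)) = u ^ β - β * d * (u ^ β / u) := by
    field_simp
    ring
  rw [← h5] at h6
  linarith [h4.trans_eq h6]

/-- Hartman–Stampacchia lemma. Local absolute continuity of the
monotone function `Θ` is expressed by the fundamental theorem of calculus for its a.e.
derivative. -/
theorem statement_11 (N : ℕ) (hN : 1 ≤ N) (C : ℝ) (hC : 0 < C) (r₀ : ℝ)
    (Θ : ℝ → ℝ) (hpos : ∀ q, r₀ ≤ q → 0 ≤ Θ q)
    (hmono : AntitoneOn Θ (Set.Ici r₀))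
    (hAC : ∀ a b, r₀ ≤ a → a ≤ b → Θ b - Θ a = ∫ t in a..b, deriv Θ t)
    (hineq : ∀ᵐ q ∂(volume : Measure ℝ), r₀ < q →
      Θ q ≤ C * (-(deriv Θ q)) ^ (((N : ℝ) + 1) / N)) :
    ∀ q, r₀ + ((N : ℝ) + 1) * C ^ ((N : ℝ) / (N + 1)) * (Θ r₀) ^ ((1 : ℝ) / (N + 1)) < q →
      Θ q = 0 := by
  intro q hq
  have hN1 : (1 : ℝ) ≤ (N : ℝ) := by exact_mod_cast hN
  have hNpos : (0 : ℝ) < (N : ℝ) := by linarith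
  have hN1pos : (0 : ℝ) < (N : ℝ) + 1 := by linarith
  set e : ℝ := (N : ℝ) / ((N : ℝ) + 1) with he_def
  set β : ℝ := (1 : ℝ) / ((N : ℝ) + 1) with hβ_def
  clear_value e β
  have heβ : e + β = 1 := by rw [he_def, hβ_def]; field_simp
  have hβ0 : 0 < β := by rw [hβ_def]; positivity
  have hβ1 : β ≤ 1 := by rw [hβ_def, div_le_one hN1pos]; linarith
  have he0 : 0 ≤ e := by rw [he_def]; positivity
  have hcInvpos : 0 < C ^ e := Real.rpow_pos_of_pos hC e
  set c : ℝ := (C ^ e)⁻¹ with hc_def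
  clear_value c
  have hcpos : 0 < c := by rw [hc_def]; exact inv_pos.2 hcInvpos
  have hA0 : 0 ≤ Θ r₀ := hpos r₀ le_rfl
  have hK0 : 0 ≤ ((N : ℝ) + 1) * C ^ e * Θ r₀ ^ β :=
    mul_nonneg (mul_nonneg (by linarith) hcInvpos.le) (Real.rpow_nonneg hA0 β)
  have hr0q : r₀ < q := by linarith
  -- derivative is nonpositive
  have hder : ∀ t, r₀ < t → deriv Θ t ≤ 0 := by
    intro t ht
    by_cases hdiff : DifferentiableAt ℝ Θ t
    · have h1 : Tendsto (slope Θ t) (𝓝[>] t) (𝓝 (deriv Θ t)) :=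
        (hasDerivAt_iff_tendsto_slope.mp hdiff.hasDerivAt).mono_left
          (nhdsWithin_mono t fun y hy => Set.mem_compl_singleton_iff.mpr (ne_of_gt hy))
      refine le_of_tendsto h1 ?_
      filter_upwards [self_mem_nhdsWithin] with y hy
      rw [slope_def_field]
      apply div_nonpos_of_nonpos_of_nonneg
      · exact sub_nonpos.2
          (hmono (Set.mem_Ici.mpr ht.le) (Set.mem_Ici.mpr (ht.trans hy).le) (le_of_lt hy))
      · exact sub_nonneg.2 (le_of_lt hy)
    · simp [deriv_zero_of_not_differentiableAt hdiff]
  -- key integral step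
  have key : ∀ a b, r₀ ≤ a → a < b → 0 < Θ b →
      Θ b + (b - a) * (c * Θ b ^ e) ≤ Θ a := by
    intro a b ha hab hb
    have habr : r₀ < b := lt_of_le_of_lt ha hab
    set m : ℝ := c * Θ b ^ e with hm_def
    clear_value m
    have hmpos : 0 < m := by
      rw [hm_def]; exact mul_pos hcpos (Real.rpow_pos_of_pos hb e)
    by_cases hint : IntervalIntegrable (deriv Θ) volume a b
    · have haeI : ∀ᵐ t ∂(volume : Measure ℝ), t ∈ Set.Ioc a b → deriv Θ t ≤ -m := by
        filter_upwards [hineq] with t hineqt htmem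
        have htr : r₀ < t := lt_of_le_of_lt ha htmem.1
        have h0 : deriv Θ t ≤ 0 := hder t htr
        have hΘt : 0 ≤ Θ t := hpos t htr.le
        have h1 := hineqt htr
        have hD : 0 ≤ -(deriv Θ t) := neg_nonneg.2 h0
        have h2 : Θ t / C ≤ (-(deriv Θ t)) ^ (((N : ℝ) + 1) / N) := (div_le_iff₀' hC).2 h1
        have h3 : (Θ t / C) ^ e ≤ ((-(deriv Θ t)) ^ (((N : ℝ) + 1) / N)) ^ e :=
          Real.rpow_le_rpow (div_nonneg hΘt hC.le) h2 he0
        rw [← Real.rpow_mul hD] at h3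
        have hpe : (((N : ℝ) + 1) / N) * e = 1 := by
          rw [he_def]; field_simp
        rw [hpe, Real.rpow_one] at h3
        have hΘbt : Θ b ≤ Θ t :=
          hmono (Set.mem_Ici.mpr htr.le) (Set.mem_Ici.mpr habr.le) htmem.2
        have h4 : m ≤ (Θ t / C) ^ e := by
          rw [Real.div_rpow hΘt hC.le, hm_def, hc_def, inv_mul_eq_div]
          gcongr
        linarith
      have hIoc : IntegrableOn (deriv Θ) (Set.Ioc a b) volume := by
        rw [intervalIntegrable_iff, Set.uIoc_of_le hab.le] at hint
        exact hint
      have hle : (∫ t in a..b, deriv Θ t) ≤ ∫ _t in Set.Ioc a b, (-m) ∂volume := by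
        rw [intervalIntegral.integral_of_le hab.le]
        exact setIntegral_mono_on_ae hIoc
          (integrableOn_const (by simp [Real.volume_Ioc]))
          measurableSet_Ioc haeI
      have hconst : (∫ _t in Set.Ioc a b, (-m) ∂volume) = (b - a) * (-m) := by
        rw [setIntegral_const, Real.volume_real_Ioc_of_le hab.le]
        simp [smul_eq_mul]
      have hFTC := hAC a b ha hab.le
      rw [hconst] at hle
      have hfin : Θ b - Θ a ≤ (b - a) * (-m) := hFTC ▸ hle
      linarith
    · exfalso
      have h0 : Θ b - Θ a = 0 := by
        rw [hAC a b ha hab.le, intervalIntegral.integral_undef hint]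
      have hconstv : ∀ t ∈ Set.Icc a b, Θ t = Θ b := by
        intro t ht
        have h1 : Θ b ≤ Θ t :=
          hmono (Set.mem_Ici.mpr (le_trans ha ht.1)) (Set.mem_Ici.mpr habr.le) ht.2
        have h2 : Θ t ≤ Θ a :=
          hmono (Set.mem_Ici.mpr ha) (Set.mem_Ici.mpr (le_trans ha ht.1)) ht.1
        linarith
      have hder0 : ∀ t ∈ Set.Ioo a b, deriv Θ t = 0 := by
        intro t ht
        have hev : Θ =ᶠ[nhds t] fun _ => Θ b := by
          filter_upwards [Ioo_mem_nhds ht.1 ht.2] with y hy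
          exact hconstv y (Set.mem_Icc_of_Ioo hy)
        rw [hev.deriv_eq, deriv_const]
      have hne : volume.restrict (Set.Ioo a b) ≠ 0 := by
        simp only [ne_eq, Measure.restrict_eq_zero, Real.volume_Ioo,
          ENNReal.ofReal_eq_zero, not_le]
        linarith
      haveI : (ae (volume.restrict (Set.Ioo a b))).NeBot := ae_neBot.2 hne
      have hres : ∀ᵐ t ∂(volume.restrict (Set.Ioo a b)), r₀ < t →
          Θ t ≤ C * (-(deriv Θ t)) ^ (((N : ℝ) + 1) / N) := ae_restrict_of_ae hineq
      obtain ⟨t, ht1, ht2⟩ := (hres.and (ae_restrict_mem measurableSet_Ioo)).exists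
      have htr : r₀ < t := lt_of_le_of_lt ha ht2.1
      have h1 := ht1 htr
      have hpne : (((N : ℝ) + 1) / N) ≠ 0 := ne_of_gt (div_pos hN1pos hNpos)
      rw [hder0 t ht2, neg_zero, Real.zero_rpow hpne, mul_zero] at h1
      rw [hconstv t (Set.mem_Icc_of_Ioo ht2)] at h1
      linarith
  -- contradiction setup
  by_contra hq0
  have hΘq : 0 < Θ q := lt_of_le_of_ne (hpos q hr0q.le) (Ne.symm hq0)
  have hApos : 0 < Θ r₀ :=
    lt_of_lt_of_le hΘq (hmono (Set.mem_Ici.mpr le_rfl) (Set.mem_Ici.mpr hr0q.le) hr0q.le)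
  have hAβpos : 0 < Θ r₀ ^ β := Real.rpow_pos_of_pos hApos β
  set T : ℝ := q - r₀ with hT_def
  clear_value T
  have hTpos : 0 < T := by rw [hT_def]; linarith
  have hKT : ((N : ℝ) + 1) * C ^ e * Θ r₀ ^ β < T := by rw [hT_def]; linarith
  have hfold : ((N : ℝ) + 1) * C ^ e * (β * c) = 1 := by
    rw [hβ_def, hc_def]
    field_simp
  have hgoal : Θ r₀ ^ β < T * (β * c) := by
    have h1 : (((N : ℝ) + 1) * C ^ e * Θ r₀ ^ β) * (β * c) < T * (β * c) :=
      mul_lt_mul_of_pos_right hKT (mul_pos hβ0 hcpos)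
    calc Θ r₀ ^ β = (((N : ℝ) + 1) * C ^ e * Θ r₀ ^ β) * (β * c) := by
          rw [show ((N : ℝ) + 1) * C ^ e * Θ r₀ ^ β * (β * c)
              = (((N : ℝ) + 1) * C ^ e * (β * c)) * Θ r₀ ^ β by ring, hfold, one_mul]
      _ < T * (β * c) := h1
  set ε : ℝ := (T * (β * c) - Θ r₀ ^ β) / Θ r₀ ^ β with hε_def
  clear_value ε
  have hεpos : 0 < ε := by
    rw [hε_def]
    exact div_pos (by linarith) hAβpos
  obtain ⟨n, hn⟩ := exists_nat_gt (max 1 (T * c * Θ q ^ (-β) / ε))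
  have hn1 : (1 : ℝ) < (n : ℝ) := lt_of_le_of_lt (le_max_left _ _) hn
  have hnpos : (0 : ℝ) < (n : ℝ) := by linarith
  set δ : ℝ := T / n with hδ_def
  clear_value δ
  have hδpos : 0 < δ := by rw [hδ_def]; exact div_pos hTpos hnpos
  have hΘqβ : 0 < Θ q ^ (-β) := Real.rpow_pos_of_pos hΘq (-β)
  set s : ℝ := δ * c * Θ q ^ (-β) with hs_def
  clear_value s
  have hspos : 0 < s := by rw [hs_def]; exact mul_pos (mul_pos hδpos hcpos) hΘqβ
  have hslt : s < ε := by
    have h1 : T * c * Θ q ^ (-β) / ε < n := lt_of_le_of_lt (le_max_right _ _) hn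
    rw [div_lt_iff₀ hεpos] at h1
    rw [hs_def, hδ_def, div_mul_eq_mul_div, div_mul_eq_mul_div, div_lt_iff₀ hnpos]
    linarith [mul_comm ε (n : ℝ)]
  set A : ℕ → ℝ := fun k => r₀ + k * δ with hA_def
  clear_value A
  have hAval : ∀ k : ℕ, A k = r₀ + k * δ := fun k => by rw [hA_def]
  have hnδ : (n : ℝ) * δ = T := by
    rw [hδ_def]
    field_simp
  have hAn : A n = q := by
    rw [hAval n, hnδ, hT_def]
    ring
  have hmem : ∀ k : ℕ, r₀ ≤ A k := by
    intro k
    rw [hAval k]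
    have h1 : (0 : ℝ) ≤ (k : ℝ) * δ := mul_nonneg (Nat.cast_nonneg k) hδpos.le
    linarith
  have hle_q : ∀ k : ℕ, k ≤ n → A k ≤ q := by
    intro k hk
    rw [← hAn, hAval k, hAval n]
    have h1 : (k : ℝ) * δ ≤ (n : ℝ) * δ :=
      mul_le_mul_of_nonneg_right (by exact_mod_cast hk) hδpos.le
    linarith
  have hΘpos : ∀ k : ℕ, k ≤ n → 0 < Θ (A k) :=
    fun k hk => lt_of_lt_of_le hΘq
      (hmono (Set.mem_Ici.mpr (hmem k)) (Set.mem_Ici.mpr hr0q.le) (hle_q k hk))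
  -- per-step inequality
  have step : ∀ k : ℕ, k + 1 ≤ n →
      Θ (A (k + 1)) ^ β + β * (δ * c) * (1 + s) ^ (β - 1) ≤ Θ (A k) ^ β := by
    intro k hk
    set Y : ℝ := Θ (A (k + 1)) with hY_def
    clear_value Y
    have hYpos : 0 < Y := hY_def ▸ hΘpos (k + 1) hk
    have hYq : Θ q ≤ Y := hY_def ▸
      hmono (Set.mem_Ici.mpr (hmem (k + 1))) (Set.mem_Ici.mpr hr0q.le) (hle_q (k + 1) hk)
    set d : ℝ := δ * (c * Y ^ e) with hd_def
    clear_value d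
    have hd0 : 0 ≤ d := by
      rw [hd_def]
      exact mul_nonneg hδpos.le (mul_nonneg hcpos.le (Real.rpow_nonneg hYpos.le e))
    have hAlt : A k < A (k + 1) := by
      rw [hAval k, hAval (k + 1)]
      push_cast
      linarith [hδpos]
    have hstep : Y + d ≤ Θ (A k) := by
      have h := key (A k) (A (k + 1)) (hmem k) hAlt (hY_def ▸ hYpos)
      have hdiff : A (k + 1) - A k = δ := by rw [hAval k, hAval (k + 1)]; push_cast; ring
      rw [hdiff, ← hY_def, ← hd_def] at h
      exact h
    have h1 : (Y + d) ^ β ≤ Θ (A k) ^ β :=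
      Real.rpow_le_rpow (by linarith) hstep hβ0.le
    have h2 := concave_step hβ0 hβ1 hYpos hd0
    have hds : d ≤ Y * s := by
      have hYe : Y ^ e = Y * Y ^ (-β) := by
        have he' : (1 : ℝ) + -β = e := by linarith
        rw [← he', Real.rpow_add hYpos, Real.rpow_one]
      have hYb : Y ^ (-β) ≤ Θ q ^ (-β) :=
        Real.rpow_le_rpow_of_nonpos hΘq hYq (by linarith)
      calc d = Y * (δ * c * Y ^ (-β)) := by rw [hd_def, hYe]; ring
        _ ≤ Y * (δ * c * Θ q ^ (-β)) := by
            apply mul_le_mul_of_nonneg_left _ hYpos.le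
            exact mul_le_mul_of_nonneg_left hYb (mul_nonneg hδpos.le hcpos.le)
        _ = Y * s := by rw [hs_def]
    have hY1s : Y + d ≤ Y * (1 + s) := by rw [mul_add, mul_one]; linarith [hds]
    have h3 : (Y * (1 + s)) ^ (β - 1) ≤ (Y + d) ^ (β - 1) :=
      Real.rpow_le_rpow_of_nonpos (by linarith) hY1s (by linarith)
    have h4 : (Y * (1 + s)) ^ (β - 1) = Y ^ (β - 1) * (1 + s) ^ (β - 1) :=
      Real.mul_rpow hYpos.le (by linarith)
    have h7 : Y ^ e * Y ^ (β - 1) = 1 := by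
      rw [← Real.rpow_add hYpos]
      have he2 : e + (β - 1) = 0 := by linarith
      rw [he2, Real.rpow_zero]
    have h5 : β * (δ * c) * (1 + s) ^ (β - 1) ≤ β * d * (Y + d) ^ (β - 1) := by
      calc β * (δ * c) * (1 + s) ^ (β - 1)
          = β * d * (Y ^ (β - 1) * (1 + s) ^ (β - 1)) := by
            rw [hd_def]
            linear_combination (-(β * (δ * c) * (1 + s) ^ (β - 1))) * h7
        _ = β * d * ((Y * (1 + s)) ^ (β - 1)) := by rw [h4]
        _ ≤ β * d * (Y + d) ^ (β - 1) :=
            mul_le_mul_of_nonneg_left h3 (mul_nonneg hβ0.le hd0)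
    linarith
  -- telescoping
  have teles : ∀ m : ℕ, m ≤ n →
      Θ q ^ β + m * (β * (δ * c) * (1 + s) ^ (β - 1)) ≤ Θ (A (n - m)) ^ β := by
    intro m
    induction m with
    | zero => intro _; simp [hAn]
    | succ m ih =>
      intro hm
      have ihm := ih (by omega)
      have hk1 : (n - (m + 1)) + 1 = n - m := by omega
      have hst := step (n - (m + 1)) (by omega)
      rw [hk1] at hst
      push_cast
      push_cast at ihm
      linarith
  have hfin := teles n le_rfl
  rw [Nat.sub_self] at hfin
  have hA0q : A 0 = r₀ := by rw [hAval 0]; simp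
  rw [hA0q] at hfin
  have hH : T * (β * c) * (1 + s) ^ (β - 1) ≤ Θ r₀ ^ β := by
    have hq0' : 0 ≤ Θ q ^ β := Real.rpow_nonneg hΘq.le β
    have heq : (n : ℝ) * (β * (δ * c) * (1 + s) ^ (β - 1))
        = T * (β * c) * (1 + s) ^ (β - 1) := by rw [← hnδ]; ring
    linarith [hfin, heq]
  have h1s : (0 : ℝ) < 1 + s := by linarith
  have hcancel : (1 + s) ^ (β - 1) * (1 + s) ^ (1 - β) = 1 := by
    rw [← Real.rpow_add h1s, show β - 1 + (1 - β) = 0 by ring, Real.rpow_zero]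
  have hmul : T * (β * c) ≤ Θ r₀ ^ β * (1 + s) ^ (1 - β) := by
    have h := mul_le_mul_of_nonneg_right hH (Real.rpow_nonneg h1s.le (1 - β))
    calc T * (β * c) = T * (β * c) * ((1 + s) ^ (β - 1) * (1 + s) ^ (1 - β)) := by
          rw [hcancel, mul_one]
      _ = T * (β * c) * (1 + s) ^ (β - 1) * (1 + s) ^ (1 - β) := by ring
      _ ≤ Θ r₀ ^ β * (1 + s) ^ (1 - β) := h
  have hexp : (1 + s) ^ (1 - β) ≤ 1 + s := by
    nth_rewrite 2 [← Real.rpow_one (1 + s)]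
    exact Real.rpow_le_rpow_of_exponent_le (by linarith) (by linarith)
  have h2 : Θ r₀ ^ β * (1 + s) < Θ r₀ ^ β * (1 + ε) :=
    mul_lt_mul_of_pos_left (by linarith) hAβpos
  have h3 : Θ r₀ ^ β * (1 + ε) = T * (β * c) := by
    rw [hε_def]
    field_simp
    ring
  have h4 : Θ r₀ ^ β * (1 + s) ^ (1 - β) ≤ Θ r₀ ^ β * (1 + s) :=
    mul_le_mul_of_nonneg_left hexp hAβpos.le
  linarith
end
end

section
/- Let Ω ⊂ ℝ^N be an open bounded set, let u : Ω → ℝ be locally Lipschitz and bounded, and suppose there is a constant q such that for almost every x ∈ Ω and for every z ∈ ∂Ω one has ⟨∇u(x), x − z⟩ − u(x) ≤ q. Then |∇u(x)| ≤ (‖u‖_∞ + q) / dist(x, ∂Ω) for almost every x ∈ Ω. -/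
open MeasureTheory Filter Metric Set
open scoped RealInnerProductSpace NNReal Topology

noncomputable section

variable {N : ℕ}

lemma exists_ray_frontier {N : ℕ} {Ω : Set (En N)} (hΩo : IsOpen Ω)
    (hΩb : Bornology.IsBounded Ω) {x : En N} (hx : x ∈ Ω) (e : En N) (he : ‖e‖ = 1) :
    ∃ t : ℝ, 0 ≤ t ∧ x + t • e ∈ frontier Ω := by
  obtain ⟨r, hr⟩ := hΩb.subset_closedBall x
  set S : Set ℝ := {t : ℝ | 0 ≤ t ∧ x + t • e ∈ closure Ω} with hS
  have hScl : IsClosed S := by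
    have : S = Set.Ici (0:ℝ) ∩ (fun t : ℝ => x + t • e) ⁻¹' closure Ω := rfl
    rw [this]
    exact isClosed_Ici.inter (isClosed_closure.preimage (by continuity))
  have hne : (0:ℝ) ∈ S := ⟨le_refl _, by simpa using subset_closure hx⟩
  have hbdd : BddAbove S := by
    refine ⟨r, fun t ht => ?_⟩
    have h1 : x + t • e ∈ closedBall x r :=
      (closure_minimal hr isClosed_closedBall) ht.2
    have h2 : dist (x + t • e) x = t := by
      simp [dist_eq_norm, norm_smul, he, abs_of_nonneg ht.1]
    simpa [h2] using mem_closedBall.1 h1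
  set t := sSup S with ht
  have htS : t ∈ S := hScl.csSup_mem ⟨0, hne⟩ hbdd
  refine ⟨t, htS.1, ?_, ?_⟩
  · exact htS.2
  · intro hmem
    rw [hΩo.interior_eq] at hmem
    obtain ⟨δ, hδ, hball⟩ := Metric.isOpen_iff.1 hΩo _ hmem
    have : t + δ/2 ∈ S := by
      constructor
      · linarith [htS.1]
      · apply subset_closure
        apply hball
        have : x + (t + δ/2) • e = (x + t • e) + (δ/2) • e := by
          rw [add_smul]; abel
        rw [this, mem_ball]
        have h3 : dist (x + t • e + (δ/2) • e) (x + t • e) = δ/2 := by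
          simp [dist_eq_norm, norm_smul, he, abs_div, abs_of_pos hδ]
        rw [h3]; linarith
    have := le_csSup hbdd this
    linarith

/-- the gradient bound `|∇u(x)| ≤ (‖u‖_∞ + q)/dist(x, ∂Ω)` deduced from
the support-function inequality `⟨∇u(x), x - z⟩ - u(x) ≤ q` for all boundary points `z`. -/
theorem statement_12 (N : ℕ) (Ω : Set (En N)) (hΩo : IsOpen Ω)
    (hΩb : Bornology.IsBounded Ω)
    (u : En N → ℝ) (hLip : LocLipschitzOn Ω u)
    (M : ℝ) (hM : ∀ x ∈ Ω, |u x| ≤ M)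
    (q : ℝ)
    (h : ∀ᵐ x ∂(volume.restrict Ω), ∀ z ∈ frontier Ω,
      (inner ℝ (gradient u x) (x - z) : ℝ) - u x ≤ q) :
    ∀ᵐ x ∂(volume.restrict Ω),
      ‖gradient u x‖ ≤ (M + q) / Metric.infDist x (frontier Ω) := by
  filter_upwards [h, ae_restrict_mem hΩo.measurableSet] with x hx hxΩ
  set g := gradient u x with hg
  have hMx := hM x hxΩ
  rcases subsingleton_or_nontrivial (En N) with hs | hs
  · have hg0 : g = 0 := Subsingleton.elim _ _
    have hd0 : Metric.infDist x (frontier Ω) = 0 := by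
      rcases (frontier Ω).eq_empty_or_nonempty with he | ⟨y, hy⟩
      · simp [he]
      · have h1 : Metric.infDist x (frontier Ω) ≤ dist x y := Metric.infDist_le_dist_of_mem hy
        have h2 : dist x y = 0 := by
          simp [Subsingleton.elim x y]
        have := Metric.infDist_nonneg (s := frontier Ω) (x := x)
        linarith
    simp [hg0, hd0]
  · -- frontier is nonempty
    have hΩne : Ω ≠ univ := by
      intro hu
      exact NormedSpace.unbounded_univ ℝ (En N) (hu ▸ hΩb)
    have hfne : (frontier Ω).Nonempty := nonempty_frontier_iff.2 ⟨⟨x, hxΩ⟩, hΩne⟩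
    have hxnf : x ∉ frontier Ω := by
      rw [hΩo.frontier_eq]
      exact fun hc => hc.2 hxΩ
    have hd : 0 < Metric.infDist x (frontier Ω) :=
      (isClosed_frontier.notMem_iff_infDist_pos hfne).1 hxnf
    by_cases hg0 : g = 0
    · obtain ⟨z, hz⟩ := hfne
      have h1 := hx z hz
      rw [hg0] at h1
      simp only [inner_zero_left, zero_sub] at h1
      have hMq : 0 ≤ M + q := by
        have := abs_le.1 hMx
        linarith
      rw [hg0]
      simp only [norm_zero]
      exact div_nonneg hMq hd.le
    · set e : En N := -(‖g‖⁻¹ • g) with he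
      have hgn : (0:ℝ) < ‖g‖ := norm_pos_iff.2 hg0
      have hene : ‖e‖ = 1 := by
        rw [he, norm_neg, norm_smul, norm_inv, norm_norm]
        field_simp
      obtain ⟨t, ht0, htf⟩ := exists_ray_frontier hΩo hΩb hxΩ e hene
      set z := x + t • e with hz
      have hinner : (inner ℝ g (x - z) : ℝ) = t * ‖g‖ := by
        have : x - z = -(t • e) := by rw [hz]; abel
        rw [this, inner_neg_right, he, inner_smul_right, inner_neg_right,
          inner_smul_right, real_inner_self_eq_norm_sq]
        field_simp
      have h1 := hx z htf
      rw [hinner] at h1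
      have hdist : Metric.infDist x (frontier Ω) ≤ t := by
        have h2 : Metric.infDist x (frontier Ω) ≤ dist x z := Metric.infDist_le_dist_of_mem htf
        have h3 : dist x z = t := by
          rw [hz, dist_eq_norm]
          simp [norm_smul, hene, abs_of_nonneg ht0]
        linarith
      rw [le_div_iff₀ hd]
      have habs := abs_le.1 hMx
      nlinarith [hd, hdist, hgn]
end
end

section
/- Let u : Ω → ℝ, x̄ ∈ Ω, ρ > 0 with the closed ball B_ρ(x̄) ⊂ Ω, and constants 0 < δ ≤ δ'. Assume u(x) ≤ u(x̄) + ∇u(x̄)·(x−x̄) + (δ/2)|x−x̄| and u(x) ≥ u(x̄) + ∇u(x̄)·(x−x̄) − (δ'/2)|x−x̄| for all x ∈ B_ρ(x̄). Let v : ℝ^N → ℝ be a function with δ|x| ≤ v(x) ≤ δ'|x| for all x (e.g. v(x) = sup_j ξ_j·x for finitely many vectors ξ_j with this property), and define w_ρ(x) := v(x−x̄) + u(x̄) + ∇u(x̄)·(x−x̄) − (δ/3)ρ. Then w_ρ(x) ≥ u(x) for every x ∈ ∂B_ρ(x̄), and w_ρ(x) ≤ u(x) for every x in the ball B_{(δ/δ')(2ρ/9)}(x̄).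 -/
open MeasureTheory Filter Metric Set
open scoped RealInnerProductSpace NNReal Topology

noncomputable section

variable {N : ℕ}

/-- pyramidal construction, Step 1 of Theorem 5.1: the comparison
function `w_ρ` lies above `u` on `∂B_ρ(x̄)` and below `u` on `B_{(δ/δ')(2ρ/9)}(x̄)`. -/
theorem statement_14 (N : ℕ) (Ω : Set (En N)) (u : En N → ℝ) (xb : En N) (hxb : xb ∈ Ω)
    (ρ δ δ' : ℝ) (hρ : 0 < ρ) (hδ : 0 < δ) (hδδ' : δ ≤ δ')
    (hball : Metric.closedBall xb ρ ⊆ Ω)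
    (hupper : ∀ x ∈ Metric.closedBall xb ρ,
      u x ≤ u xb + (inner ℝ (gradient u xb) (x - xb) : ℝ) + δ / 2 * ‖x - xb‖)
    (hlower : ∀ x ∈ Metric.closedBall xb ρ,
      u xb + (inner ℝ (gradient u xb) (x - xb) : ℝ) - δ' / 2 * ‖x - xb‖ ≤ u x)
    (v : En N → ℝ) (hv : ∀ x, δ * ‖x‖ ≤ v x ∧ v x ≤ δ' * ‖x‖)
    (w : En N → ℝ)
    (hw : ∀ x, w x = v (x - xb) + u xb + (inner ℝ (gradient u xb) (x - xb) : ℝ) - δ / 3 * ρ) :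
    (∀ x ∈ Metric.sphere xb ρ, u x ≤ w x) ∧
    (∀ x ∈ Metric.ball xb (δ / δ' * (2 * ρ / 9)), w x ≤ u x) := by
  have hδ' : 0 < δ' := lt_of_lt_of_le hδ hδδ'
  constructor
  · intro x hx
    have hn : ‖x - xb‖ = ρ := by
      simpa [dist_eq_norm] using (Metric.mem_sphere.mp hx)
    have hmem : x ∈ Metric.closedBall xb ρ := by
      simp [Metric.mem_closedBall, dist_eq_norm, hn]
    have h1 := hupper x hmem
    have h2 := (hv (x - xb)).1
    rw [hw x]
    rw [hn] at h1 h2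
    nlinarith
  · intro x hx
    have hn : ‖x - xb‖ < δ / δ' * (2 * ρ / 9) := by
      simpa [dist_eq_norm] using (Metric.mem_ball.mp hx)
    have hr : δ / δ' * (2 * ρ / 9) ≤ ρ := by
      have h1 : δ / δ' ≤ 1 := (div_le_one hδ').mpr hδδ'
      nlinarith
    have hmem : x ∈ Metric.closedBall xb ρ := by
      simp only [Metric.mem_closedBall, dist_eq_norm]
      linarith
    have h1 := hlower x hmem
    have h2 := (hv (x - xb)).2
    rw [hw x]
    have hdd : δ' * (δ / δ' * (2 * ρ / 9)) = δ * (2 * ρ / 9) := by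
      field_simp
    nlinarith [norm_nonneg (x - xb)]
end
end

section
/- Let S ⊂ ℝ^N be a convex set, f : ℝ^N → ℝ a convex function which is affine on S̄, say f(ξ) = a·ξ + b for all ξ ∈ S̄ (so that a is a subgradient of f at every point of ∂S). Let B ⊂ ℝ^N be an open ball, let u and w be locally Lipschitz on B with w ≥ u on ∂B (in the trace sense), suppose ∇w(x) ∈ ∂S for a.e. x ∈ B, and set E := {x ∈ B : w(x) ≤ u(x)}. Then ∫_E f(∇w(x)) dx ≤ ∫_E f(∇u(x)) dx. -/
open MeasureTheory Filter Metric Set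
open scoped RealInnerProductSpace NNReal Topology

noncomputable section

variable {N : ℕ}

open scoped ENNReal Pointwise

lemma step1 {N : ℕ} (S : Set (En N)) (hS : Convex ℝ S)
    (f : En N → ℝ) (hf : ConvexOn ℝ Set.univ f)
    (a : En N) (b : ℝ) (haff : ∀ ξ ∈ closure S, f ξ = (inner ℝ a ξ : ℝ) + b)
    (hne : (closure S).Nonempty) :
    ∃ c : En N, ∃ d : ℝ, (∀ ξ ∈ closure S, f ξ = (inner ℝ c ξ : ℝ) + d) ∧
      ∀ η, (inner ℝ c η : ℝ) + d ≤ f η := by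
  obtain ⟨ξ₀, hξ₀⟩ := hne
  have hCconv : Convex ℝ (closure S) := hS.closure
  set g : En N → ℝ := fun ξ => f ξ - (inner ℝ a ξ : ℝ) - b with hg
  have hg0 : ∀ ξ ∈ closure S, g ξ = 0 := fun ξ hξ => by simp [hg, haff ξ hξ]
  have hgconv : ∀ (ξ η : En N) (s t : ℝ), 0 ≤ s → 0 ≤ t → s + t = 1 →
      g (s • ξ + t • η) ≤ s * g ξ + t * g η := by
    intro ξ η s t hs ht hst
    have h1 := hf.2 (mem_univ ξ) (mem_univ η) hs ht hst
    have h2 : (inner ℝ a (s • ξ + t • η) : ℝ) = s * inner ℝ a ξ + t * inner ℝ a η := by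
      rw [inner_add_right, real_inner_smul_right, real_inner_smul_right]
    simp only [smul_eq_mul] at h1
    have hb : s * b + t * b = b := by rw [← add_mul, hst, one_mul]
    simp only [hg]
    rw [h2]
    linarith [h1, hb]
  set P : En N → Set ℝ := fun v => {r | ∃ ξ ∈ closure S, ∃ t : ℝ, 0 < t ∧ r = g (ξ + t • v) / t}
    with hP
  have hPne : ∀ v, (P v).Nonempty := fun v =>
    ⟨g (ξ₀ + v), ξ₀, hξ₀, 1, one_pos, by simp⟩
  have key : ∀ v w r₁ r₂, r₁ ∈ P v → r₂ ∈ P w → ∃ e ∈ P (v + w), e ≤ r₁ + r₂ := by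
    rintro v w r₁ r₂ ⟨ξ₁, hξ₁, t₁, ht₁, rfl⟩ ⟨ξ₂, hξ₂, t₂, ht₂, rfl⟩
    set t := t₁ * t₂ / (t₁ + t₂) with htdef
    have htsum : 0 < t₁ + t₂ := by linarith
    have ht : 0 < t := by positivity
    have h1 : t / t₁ + t / t₂ = 1 := by
      rw [htdef]; field_simp; ring
    have hξ : (t / t₁) • ξ₁ + (t / t₂) • ξ₂ ∈ closure S :=
      hCconv hξ₁ hξ₂ (by positivity) (by positivity) h1
    refine ⟨g ((t / t₁) • ξ₁ + (t / t₂) • ξ₂ + t • (v + w)) / t, ⟨_, hξ, t, ht, rfl⟩, ?_⟩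
    have hcomb : (t / t₁) • ξ₁ + (t / t₂) • ξ₂ + t • (v + w)
        = (t / t₁) • (ξ₁ + t₁ • v) + (t / t₂) • (ξ₂ + t₂ • w) := by
      simp only [smul_add, smul_smul]
      rw [div_mul_cancel₀ _ ht₁.ne', div_mul_cancel₀ _ ht₂.ne']
      module
    have hcv := hgconv (ξ₁ + t₁ • v) (ξ₂ + t₂ • w) (t / t₁) (t / t₂)
      (by positivity) (by positivity) h1
    rw [← hcomb] at hcv
    have h3 : ((t / t₁) * g (ξ₁ + t₁ • v) + (t / t₂) * g (ξ₂ + t₂ • w)) / t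
        = g (ξ₁ + t₁ • v) / t₁ + g (ξ₂ + t₂ • w) / t₂ := by
      field_simp
    calc g ((t / t₁) • ξ₁ + (t / t₂) • ξ₂ + t • (v + w)) / t
        ≤ ((t / t₁) * g (ξ₁ + t₁ • v) + (t / t₂) * g (ξ₂ + t₂ • w)) / t := by gcongr
      _ = _ := h3
  have hP0 : P 0 = {0} := by
    apply Set.eq_singleton_iff_nonempty_unique_mem.2
    refine ⟨hPne 0, ?_⟩
    rintro r ⟨ξ, hξ, t, ht, rfl⟩
    simp [hg0 ξ hξ]
  have hbdd : ∀ v, BddBelow (P v) := by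
    intro v
    refine ⟨-(g (ξ₀ + (-v))), ?_⟩
    rintro r hr
    have h2 : g (ξ₀ + (-v)) ∈ P (-v) := ⟨ξ₀, hξ₀, 1, one_pos, by simp⟩
    obtain ⟨e, he, hle⟩ := key v (-v) r _ hr h2
    rw [add_neg_cancel, hP0] at he
    simp only [mem_singleton_iff] at he
    subst he
    linarith
  set p : En N → ℝ := fun v => sInf (P v) with hp
  have hple : ∀ v ξ, ξ ∈ closure S → ∀ t : ℝ, 0 < t → p v ≤ g (ξ + t • v) / t :=
    fun v ξ hξ t ht => csInf_le (hbdd v) ⟨ξ, hξ, t, ht, rfl⟩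
  have hp0 : p 0 = 0 := by rw [hp]; simp only [hP0]; exact csInf_singleton 0
  have N_add : ∀ v w, p (v + w) ≤ p v + p w := by
    intro v w
    have h2 : ∀ r₁ ∈ P v, ∀ r₂ ∈ P w, p (v + w) ≤ r₁ + r₂ := by
      intro r₁ h₁ r₂ h₂
      obtain ⟨e, he, hle⟩ := key v w r₁ r₂ h₁ h₂
      exact (csInf_le (hbdd _) he).trans hle
    have h3 : ∀ r₂ ∈ P w, p (v + w) - r₂ ≤ p v := by
      intro r₂ h₂
      exact le_csInf (hPne v) fun r₁ h₁ => by linarith [h2 r₁ h₁ r₂ h₂]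
    have h4 : p (v + w) - p v ≤ p w := by
      apply le_csInf (hPne w)
      intro r₂ h₂
      linarith [h3 r₂ h₂]
    linarith
  have N_hom : ∀ c : ℝ, 0 < c → ∀ v, p (c • v) = c * p v := by
    intro c hc v
    have himg : P (c • v) = (fun r => c * r) '' P v := by
      ext r
      constructor
      · rintro ⟨ξ, hξ, t, ht, rfl⟩
        refine ⟨g (ξ + (t * c) • v) / (t * c), ⟨ξ, hξ, t * c, by positivity, rfl⟩, ?_⟩
        rw [smul_smul]
        field_simp
      · rintro ⟨r', ⟨ξ, hξ, t, ht, rfl⟩, rfl⟩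
        refine ⟨ξ, hξ, t / c, by positivity, ?_⟩
        rw [smul_smul, div_mul_cancel₀ _ hc.ne']
        field_simp
    rw [hp]
    simp only [himg]
    have : (fun r => c * r) '' P v = (c • (P v) : Set ℝ) := by
      ext r; simp [Set.mem_smul_set, smul_eq_mul]
    rw [this, ← smul_eq_mul, ← Real.sInf_smul_of_nonneg hc.le]
  obtain ⟨m, -, hm⟩ := exists_extension_of_le_sublinear ⟨⊥, 0⟩ p N_hom N_add
    (by rintro ⟨x, hx⟩
        simp only [Submodule.mem_bot] at hx
        subst hx
        simp [hp0])
  have hm1 : ∀ η ξ, ξ ∈ closure S → m (η - ξ) ≤ g η := by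
    intro η ξ hξ
    refine (hm _).trans ?_
    have := hple (η - ξ) ξ hξ 1 one_pos
    simpa using this
  set c₀ : En N := (InnerProductSpace.toDual ℝ (En N)).symm
    (LinearMap.toContinuousLinearMap m) with hc₀
  have hc₀app : ∀ x : En N, (inner ℝ c₀ x : ℝ) = m x := by
    intro x
    rw [hc₀, InnerProductSpace.toDual_symm_apply]
    rfl
  refine ⟨a + c₀, b - m ξ₀, ?_, ?_⟩
  · intro ξ hξ
    have e1 : m (ξ - ξ₀) ≤ 0 := by
      have := hm1 ξ ξ₀ hξ₀; rw [hg0 ξ hξ] at this; exact this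
    have e2 : m (ξ₀ - ξ) ≤ 0 := by
      have := hm1 ξ₀ ξ hξ; rw [hg0 ξ₀ hξ₀] at this; exact this
    have e3 : m (ξ₀ - ξ) = -(m (ξ - ξ₀)) := by
      rw [← map_neg]; congr 1; abel
    have e4 : m (ξ - ξ₀) = m ξ - m ξ₀ := map_sub m ξ ξ₀
    have e5 : m ξ - m ξ₀ = 0 := by rw [← e4]; linarith
    rw [haff ξ hξ, inner_add_left, hc₀app]
    linarith
  · intro η
    have e1 : m (η - ξ₀) ≤ g η := hm1 η ξ₀ hξ₀
    have e4 : m (η - ξ₀) = m η - m ξ₀ := map_sub m η ξ₀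
    have e6 : g η = f η - (inner ℝ a η : ℝ) - b := rfl
    rw [inner_add_left, hc₀app]
    linarith

set_option maxHeartbeats 1000000 in
lemma fderiv_ae_zero_on_zero_set {N : ℕ} {g : En N → ℝ} {K : ℝ≥0} (hg : LipschitzWith K g) :
    ∀ᵐ x ∂(volume.restrict {y | g y = 0}), fderiv ℝ g x = 0 := by
  set A : Set (En N) := {y | g y = 0} with hA
  have hAmeas : MeasurableSet A := (isClosed_eq hg.continuous continuous_const).measurableSet
  have hdiff : ∀ᵐ x ∂(volume.restrict A), DifferentiableAt ℝ g x :=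
    ae_restrict_of_ae hg.ae_differentiableAt
  have hdens := Besicovitch.ae_tendsto_measure_inter_div (volume : Measure (En N)) A
  filter_upwards [hdiff, hdens, ae_restrict_mem hAmeas] with x hdx hdn hxA
  by_contra hL0
  set L := fderiv ℝ g x with hLdef
  have hLn : 0 < ‖L‖ := norm_pos_iff.2 hL0
  -- find a unit vector e with L e > ‖L‖ / 2
  obtain ⟨e, he1, he2⟩ : ∃ e : En N, ‖e‖ = 1 ∧ ‖L‖ / 2 < L e := by
    have : ¬(∀ y : En N, ‖L y‖ ≤ (‖L‖ / 2) * ‖y‖) := by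
      intro h
      have := ContinuousLinearMap.opNorm_le_bound L (by positivity) h
      linarith
    push_neg at this
    obtain ⟨y, hy⟩ := this
    have hyne : y ≠ 0 := by
      rintro rfl; simp at hy
    have hyn : 0 < ‖y‖ := norm_pos_iff.2 hyne
    set e' : En N := ‖y‖⁻¹ • y with he'
    have he'n : ‖e'‖ = 1 := by
      rw [he', norm_smul]; simp [abs_of_nonneg, hyn.ne', inv_mul_cancel₀ hyn.ne']
    have hLe' : ‖L‖ / 2 < ‖L e'‖ := by
      rw [he', ContinuousLinearMap.map_smul, norm_smul, norm_inv, norm_norm]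
      have h2 : ‖y‖⁻¹ * (‖L‖ / 2 * ‖y‖) < ‖y‖⁻¹ * ‖L y‖ :=
        mul_lt_mul_of_pos_left hy (by positivity)
      have h3 : ‖y‖⁻¹ * (‖L‖ / 2 * ‖y‖) = ‖L‖ / 2 := by field_simp
      linarith
    rcases le_or_gt 0 (L e') with h | h
    · exact ⟨e', he'n, by rwa [Real.norm_eq_abs, abs_of_nonneg h] at hLe'⟩
    · refine ⟨-e', by simpa using he'n, ?_⟩
      rw [map_neg]
      rw [Real.norm_eq_abs, abs_of_neg h] at hLe'
      linarith
  -- differentiability estimate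
  have hlittleo := hdx.hasFDerivAt.isLittleO
  have heps : ∀ᶠ y in 𝓝 x, ‖g y - g x - L (y - x)‖ ≤ ‖L‖ / 8 * ‖y - x‖ :=
    hlittleo.def (by positivity)
  rw [Metric.eventually_nhds_iff] at heps
  obtain ⟨r₀, hr₀, hest⟩ := heps
  -- main estimate: for R small, the density ratio is bounded away from 1
  set θ : ℝ≥0∞ := ENNReal.ofReal ((1 / 9 : ℝ) ^ N) with hθ
  have hθ0 : θ ≠ 0 := by
    rw [hθ]; simp only [ne_eq, ENNReal.ofReal_eq_zero, not_le]; positivity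
  have hθ1 : θ ≤ 1 := by
    rw [hθ]
    apply ENNReal.ofReal_le_one.2
    apply pow_le_one₀ (by norm_num) (by norm_num)
  have hbound : ∀ᶠ R in 𝓝[>] (0 : ℝ),
      volume (A ∩ closedBall x R) / volume (closedBall x R) ≤ 1 - θ := by
    filter_upwards [Ioo_mem_nhdsGT_of_mem (Set.mem_Ico.2 ⟨le_refl 0, by positivity⟩ :
      (0:ℝ) ∈ Set.Ico 0 (9 * r₀ / 16))] with R hR
    obtain ⟨hR0, hRr⟩ := hR
    set r : ℝ := (8 / 9) * R with hr
    have hr0 : 0 < r := by positivity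
    have h2r : 2 * r < r₀ := by rw [hr]; linarith
    -- the small ball B' avoids A
    have hdisj : ∀ y ∈ closedBall (x + r • e) (R / 9), y ∉ A := by
      intro y hy
      have hyc : ‖y - (x + r • e)‖ ≤ R / 9 := by
        rw [← dist_eq_norm]; exact hy
      have hyx : ‖y - x‖ ≤ 2 * r := by
        have : y - x = (y - (x + r • e)) + r • e := by abel
        rw [this]
        calc ‖(y - (x + r • e)) + r • e‖ ≤ ‖y - (x + r • e)‖ + ‖r • e‖ := norm_add_le _ _
          _ ≤ R / 9 + r := by
              rw [norm_smul, he1, mul_one, Real.norm_eq_abs, abs_of_pos hr0]; linarith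
          _ ≤ 2 * r := by rw [hr]; linarith
      have hyx' : dist y x < r₀ := by
        rw [dist_eq_norm]; linarith
      have hL1 : L (y - x) ≥ r * (‖L‖ / 2) - ‖L‖ * (R / 9) := by
        have : y - x = r • e + (y - (x + r • e)) := by abel
        rw [this, map_add]
        have e1 : L (r • e) = r * L e := by rw [ContinuousLinearMap.map_smul]; rfl
        have e2 : ‖L (y - (x + r • e))‖ ≤ ‖L‖ * (R / 9) :=
          le_trans (L.le_opNorm _) (by
            have := L.le_opNorm (y - (x + r • e))
            exact mul_le_mul_of_nonneg_left hyc (norm_nonneg L))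
        have e3 : L (y - (x + r • e)) ≥ -(‖L‖ * (R / 9)) := by
          have := neg_abs_le (L (y - (x + r • e)))
          rw [ge_iff_le, neg_le]
          calc -(L (y - (x + r • e))) ≤ ‖L (y - (x + r • e))‖ := by
                rw [Real.norm_eq_abs]; exact neg_le_abs _
            _ ≤ ‖L‖ * (R / 9) := e2
        have e4 : r * (‖L‖ / 2) ≤ r * L e := by
          apply mul_le_mul_of_nonneg_left he2.le hr0.le
        rw [e1]
        linarith
      have herr : ‖g y - g x - L (y - x)‖ ≤ ‖L‖ / 8 * ‖y - x‖ := hest hyx'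
      have herr' : g y - g x - L (y - x) ≥ -(‖L‖ / 8 * (2 * r)) := by
        have h5 : ‖L‖ / 8 * ‖y - x‖ ≤ ‖L‖ / 8 * (2 * r) := by
          apply mul_le_mul_of_nonneg_left hyx (by positivity)
        have h6 := neg_abs_le (g y - g x - L (y - x))
        rw [Real.norm_eq_abs] at herr
        linarith
      have hgx : g x = 0 := hxA
      have hR9 : ‖L‖ * (R / 9) = ‖L‖ * (r / 8) := by rw [hr]; ring
      have : g y > 0 := by
        have : g y ≥ g x + (r * (‖L‖ / 2) - ‖L‖ * (R / 9)) - ‖L‖ / 8 * (2 * r) := by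
          linarith
        rw [hgx, hR9] at this
        have hfin : r * (‖L‖ / 2) - ‖L‖ * (r / 8) - ‖L‖ / 8 * (2 * r) = r * ‖L‖ / 8 := by ring
        rw [zero_add] at this
        nlinarith
      intro hyA
      rw [hA] at hyA
      simp only [Set.mem_setOf_eq] at hyA
      linarith
    -- measure estimate
    have hsub : closedBall (x + r • e) (R / 9) ⊆ closedBall x R := by
      apply closedBall_subset_closedBall'
      rw [dist_eq_norm]
      have : ‖x + r • e - x‖ = r := by
        simp [norm_smul, he1, abs_of_pos hr0]
      rw [this, hr]; linarith
    have hdisj2 : Disjoint (A ∩ closedBall x R) (closedBall (x + r • e) (R / 9)) := by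
      rw [Set.disjoint_left]
      rintro y ⟨hyA, -⟩ hyB
      exact hdisj y hyB hyA
    have hm : volume (A ∩ closedBall x R) + volume (closedBall (x + r • e) (R / 9))
        ≤ volume (closedBall x R) := by
      rw [← measure_union hdisj2 measurableSet_closedBall]
      apply measure_mono
      intro y hy
      rcases hy with h | h
      · exact h.2
      · exact hsub h
    have hVsmall : volume (closedBall (x + r • e) (R / 9)) = θ * volume (closedBall x R) := by
      rw [Measure.addHaar_closedBall _ _ (by positivity : (0:ℝ) ≤ R / 9),
          Measure.addHaar_closedBall _ _ hR0.le]
      rw [← mul_assoc, ← ENNReal.ofReal_mul (by positivity)]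
      congr 2
      rw [finrank_euclideanSpace, Fintype.card_fin]
      rw [div_eq_mul_one_div R 9, mul_comm R (1/9), mul_pow]
    set a := volume (closedBall x R) with ha
    have ha0 : a ≠ 0 := (measure_ball_pos volume x hR0).trans_le (measure_mono ball_subset_closedBall) |>.ne'
    have hatop : a ≠ ⊤ := measure_closedBall_lt_top.ne
    rw [hVsmall] at hm
    have h7 : volume (A ∩ closedBall x R) ≤ a - θ * a := ENNReal.le_sub_of_add_le_right (by simp [hθ, ENNReal.ofReal_ne_top, ENNReal.mul_ne_top, measure_closedBall_lt_top.ne, ENNReal.mul_eq_top, hatop]) hm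
    have h8 : volume (A ∩ closedBall x R) / a ≤ (a - θ * a) / a :=
      ENNReal.div_le_div_right h7 a
    refine h8.trans ?_
    have h9 : a - θ * a = (1 - θ) * a := by
      rw [ENNReal.sub_mul (fun _ _ => hatop), one_mul]
    rw [h9, mul_div_assoc, ENNReal.div_self ha0 hatop, mul_one]
  have := le_of_tendsto hdn hbound
  have hlt : (1 : ℝ≥0∞) - θ < 1 := by
    apply ENNReal.sub_lt_self ENNReal.one_ne_top one_ne_zero hθ0
  exact absurd this (not_le.2 hlt)

lemma integral_fderiv_apply_eq_zero {N : ℕ} {g : En N → ℝ} {K : ℝ≥0} (hg : LipschitzWith K g)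
    {x₀ : En N} {R : ℝ} (hR : 0 < R) (hsupp : ∀ x, x ∉ closedBall x₀ R → g x = 0)
    (v : En N) : ∫ x, fderiv ℝ g x v = 0 := by
  set F : ℕ → En N → ℝ := fun n x => (g (x + (1 / (n + 1) : ℝ) • v) - g x) / (1 / (n + 1) : ℝ)
    with hF
  have htpos : ∀ n : ℕ, (0:ℝ) < 1 / (n + 1) := fun n => by positivity
  have htle : ∀ n : ℕ, (1 / ((n:ℝ) + 1)) ≤ 1 := fun n => by
    rw [div_le_one (by positivity)]; linarith [Nat.cast_nonneg (α := ℝ) n]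
  have hgi : Integrable g := by
    apply Continuous.integrable_of_hasCompactSupport hg.continuous
    exact HasCompactSupport.intro (isCompact_closedBall x₀ R) hsupp
  have hFint : ∀ n : ℕ, ∫ x, F n x = 0 := by
    intro n
    have h1 : Integrable (fun x => g (x + (1 / (n + 1) : ℝ) • v)) :=
      hgi.comp_add_right _
    have h2 : ∫ x, g (x + (1 / (n + 1) : ℝ) • v) = ∫ x, g x :=
      integral_add_right_eq_self g _
    calc ∫ x, F n x = (∫ x, (g (x + (1 / (n + 1) : ℝ) • v) - g x)) / (1 / (n + 1) : ℝ) :=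
          integral_div _ _
      _ = 0 := by rw [integral_sub h1 hgi, h2]; simp
  have hconv : ∀ᵐ x : En N, Tendsto (fun n => F n x) atTop (𝓝 (fderiv ℝ g x v)) := by
    filter_upwards [hg.ae_differentiableAt (μ := volume)] with x hx
    have hd : HasDerivAt (fun t : ℝ => g (x + t • v)) (fderiv ℝ g x v) 0 := by
      have h3 : HasFDerivAt g (fderiv ℝ g x) (x + (0:ℝ) • v) := by
        simpa using hx.hasFDerivAt
      have h4 : HasDerivAt (fun t : ℝ => x + t • v) v 0 := by
        simpa using ((hasDerivAt_id (0:ℝ)).smul_const v).const_add x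
      exact (h3.comp_hasDerivAt (0:ℝ) h4)
    have h5 := hasDerivAt_iff_tendsto_slope.1 hd
    have h6 : Tendsto (fun n : ℕ => (1 / (n + 1) : ℝ)) atTop (𝓝[≠] 0) := by
      apply tendsto_nhdsWithin_of_tendsto_nhds_of_eventually_within
      · exact tendsto_one_div_add_atTop_nhds_zero_nat
      · exact Eventually.of_forall (fun n => (htpos n).ne')
    have h8 := h5.comp h6
    have h7 : (fun n : ℕ => slope (fun t : ℝ => g (x + t • v)) 0 (1 / (n + 1) : ℝ))
        = fun n => F n x := by
      funext n
      rw [slope_def_field]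
      simp [hF]
    rw [← h7]
    exact h8
  have hbound : ∀ n : ℕ, ∀ᵐ x : En N,
      ‖F n x‖ ≤ (closedBall x₀ (R + ‖v‖)).indicator (fun _ => (K : ℝ) * ‖v‖) x := by
    intro n
    apply Eventually.of_forall
    intro x
    by_cases hx : x ∈ closedBall x₀ (R + ‖v‖)
    · rw [indicator_of_mem hx]
      have h9 : |g (x + (1 / (n + 1) : ℝ) • v) - g x| ≤ (K : ℝ) * (1 / (n + 1) : ℝ) * ‖v‖ := by
        have := hg.dist_le_mul (x + (1 / (n + 1) : ℝ) • v) x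
        rw [Real.dist_eq] at this
        refine this.trans ?_
        rw [dist_eq_norm]
        have : x + (1 / (n + 1) : ℝ) • v - x = (1 / (n + 1) : ℝ) • v := by abel
        rw [this, norm_smul, Real.norm_eq_abs, abs_of_pos (htpos n)]
        rw [mul_assoc]
      rw [hF, Real.norm_eq_abs, abs_div, abs_of_pos (htpos n)]
      rw [div_le_iff₀ (htpos n)]
      calc |g (x + (1 / (n + 1) : ℝ) • v) - g x| ≤ (K : ℝ) * (1 / (n + 1) : ℝ) * ‖v‖ := h9
        _ = (K : ℝ) * ‖v‖ * (1 / (n + 1) : ℝ) := by ring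
    · rw [indicator_of_notMem hx]
      have hg1 : g x = 0 := by
        apply hsupp
        rw [mem_closedBall, dist_eq_norm, not_le]
        rw [mem_closedBall, dist_eq_norm, not_le] at hx
        nlinarith [norm_nonneg v]
      have hg2 : g (x + (1 / (n + 1) : ℝ) • v) = 0 := by
        apply hsupp
        rw [mem_closedBall, dist_eq_norm, not_le]
        rw [mem_closedBall, dist_eq_norm, not_le] at hx
        have htri : ‖x - x₀‖ ≤ ‖x + (1 / (n + 1) : ℝ) • v - x₀‖ + ‖(1 / (n + 1) : ℝ) • v‖ := by
          calc ‖x - x₀‖ = ‖(x + (1 / (n + 1) : ℝ) • v - x₀) - (1 / (n + 1) : ℝ) • v‖ := by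
                congr 1; abel
            _ ≤ _ := norm_sub_le _ _
        have h12 : ‖(1 / (n + 1) : ℝ) • v‖ ≤ ‖v‖ := by
          rw [norm_smul, Real.norm_eq_abs, abs_of_pos (htpos n)]
          nlinarith [norm_nonneg v, htpos n, htle n]
        linarith
      have hfz : F n x = 0 := by
        simp only [hF]
        rw [hg1, hg2]
        simp
      simp [hfz]
  have hFmeas : ∀ n : ℕ, AEStronglyMeasurable (F n) volume := by
    intro n
    apply Continuous.aestronglyMeasurable
    exact ((hg.continuous.comp (continuous_id.add continuous_const)).sub hg.continuous).div_const _
  have hbint : Integrable ((closedBall x₀ (R + ‖v‖)).indicator (fun _ => (K : ℝ) * ‖v‖)) := by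
    rw [integrable_indicator_iff measurableSet_closedBall]
    exact integrableOn_const measure_closedBall_lt_top.ne
  have hlim := tendsto_integral_of_dominated_convergence _ hFmeas hbint hbound hconv
  have : Tendsto (fun n : ℕ => (0:ℝ)) atTop (𝓝 (∫ x, fderiv ℝ g x v)) := by
    simpa [hFint] using hlim
  exact (tendsto_nhds_unique tendsto_const_nhds this).symm

lemma lipschitz_zero_ext {N : ℕ} {h : En N → ℝ} {K : ℝ≥0} (hh : LipschitzWith K h)
    {x₀ : En N} {ρ : ℝ} (hsph : ∀ x ∈ sphere x₀ ρ, 0 ≤ h x) :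
    LipschitzWith K ((closedBall x₀ ρ).indicator (fun x => min (h x) 0)) := by
  set m : En N → ℝ := fun x => min (h x) 0 with hmdef
  have hm : LipschitzWith K m := hh.min_const 0
  have hmsph : ∀ p ∈ sphere x₀ ρ, m p = 0 := fun p hp => min_eq_right (hsph p hp)
  have key : ∀ x y, x ∈ closedBall x₀ ρ → y ∉ closedBall x₀ ρ → dist (m x) 0 ≤ K * dist x y := by
    intro x y hx hy
    have hφ : Continuous fun t : ℝ => dist (x + t • (y - x)) x₀ := by
      apply Continuous.dist _ continuous_const
      exact continuous_const.add (continuous_id.smul continuous_const)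
    have h0 : dist (x + (0:ℝ) • (y - x)) x₀ ≤ ρ := by simpa using hx
    have h1 : ρ ≤ dist (x + (1:ℝ) • (y - x)) x₀ := by
      have he : x + (1:ℝ) • (y - x) = y := by rw [one_smul]; abel
      rw [he]
      rw [mem_closedBall, not_le] at hy
      exact hy.le
    obtain ⟨t, ht, htρ⟩ := intermediate_value_Icc (zero_le_one (α := ℝ))
      hφ.continuousOn (Set.mem_Icc.2 ⟨h0, h1⟩)
    have hmp : m (x + t • (y - x)) = 0 := hmsph _ (by rw [mem_sphere]; exact htρ)
    rw [← hmp]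
    refine (hm.dist_le_mul x _).trans ?_
    have hdxp : dist x (x + t • (y - x)) ≤ dist x y := by
      rw [dist_eq_norm, dist_eq_norm]
      have he2 : x - (x + t • (y - x)) = (-t) • (y - x) := by
        rw [neg_smul]; abel
      rw [he2, norm_smul, Real.norm_eq_abs, abs_neg, abs_of_nonneg ht.1, norm_sub_rev]
      exact mul_le_of_le_one_left (norm_nonneg _) ht.2
    exact mul_le_mul_of_nonneg_left hdxp K.coe_nonneg
  rw [lipschitzWith_iff_dist_le_mul]
  intro x y
  by_cases hx : x ∈ closedBall x₀ ρ <;> by_cases hy : y ∈ closedBall x₀ ρ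
  · rw [indicator_of_mem hx, indicator_of_mem hy]
    exact hm.dist_le_mul x y
  · rw [indicator_of_mem hx, indicator_of_notMem hy]
    exact key x y hx hy
  · rw [indicator_of_notMem hx, indicator_of_mem hy, dist_comm, ← dist_comm y x]
    exact key y x hy hx
  · rw [indicator_of_notMem hx, indicator_of_notMem hy]
    simp only [dist_self]
    positivity

/-- Step 2 of Theorem 5.1: comparison of the energies of `w` and `u`
on the contact set `E = {w ≤ u}`, when `f` is affine on `S̄` and `∇w ∈ ∂S` a.e. -/
theorem statement_15 (N : ℕ) (S : Set (En N)) (hS : Convex ℝ S)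
    (f : En N → ℝ) (hf : ConvexOn ℝ Set.univ f)
    (a : En N) (b : ℝ) (haff : ∀ ξ ∈ closure S, f ξ = (inner ℝ a ξ : ℝ) + b)
    (x₀ : En N) (ρ : ℝ) (hρ : 0 < ρ)
    (u w : En N → ℝ)
    (hu : ∃ K : ℝ≥0, LipschitzOnWith K u (Metric.closedBall x₀ ρ))
    (hw : ∃ K : ℝ≥0, LipschitzOnWith K w (Metric.closedBall x₀ ρ))
    (hbd : ∀ x ∈ Metric.sphere x₀ ρ, u x ≤ w x)
    (hgradw : ∀ᵐ x ∂(volume.restrict (Metric.ball x₀ ρ)), gradient w x ∈ frontier S) :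
    ∫ x in {y ∈ Metric.ball x₀ ρ | w y ≤ u y}, f (gradient w x) ≤
      ∫ x in {y ∈ Metric.ball x₀ ρ | w y ≤ u y}, f (gradient u x) := by
  rcases Nat.eq_zero_or_pos N with hN0 | hN0
  · subst hN0
    apply le_of_eq
    apply integral_congr_ae
    apply Eventually.of_forall
    intro x
    have hgg : gradient w x = gradient u x := by
      ext i
      exact i.elim0
    exact congrArg f hgg
  haveI : Nontrivial (En N) := by
    refine ⟨EuclideanSpace.single ⟨0, hN0⟩ 1, 0, ?_⟩
    intro hcontra
    have h0 := congrArg (fun v : En N => v ⟨0, hN0⟩) hcontra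
    simp [EuclideanSpace.single_apply] at h0
  obtain ⟨Ku, hKu⟩ := hu
  obtain ⟨Kw, hKw⟩ := hw
  obtain ⟨ub, hub, huEq⟩ := hKu.extend_real
  obtain ⟨wb, hwb, hwEq⟩ := hKw.extend_real
  set B := Metric.ball x₀ ρ with hB
  have hBsub : B ⊆ Metric.closedBall x₀ ρ := ball_subset_closedBall
  set E := {y ∈ Metric.ball x₀ ρ | w y ≤ u y} with hE
  have hEB : E ⊆ B := fun x hx => hx.1
  have hEcB : E ⊆ Metric.closedBall x₀ ρ := fun x hx => hBsub (hEB hx)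
  have hEeq : E = B ∩ {x | wb x ≤ ub x} := by
    ext z
    constructor
    · rintro ⟨hz1, hz2⟩
      refine ⟨hz1, ?_⟩
      show wb z ≤ ub z
      rw [← huEq (hBsub hz1), ← hwEq (hBsub hz1)]
      exact hz2
    · rintro ⟨hz1, hz2⟩
      refine ⟨hz1, ?_⟩
      simp only [mem_setOf_eq] at hz2 ⊢
      rw [huEq (hBsub hz1), hwEq (hBsub hz1)]
      exact hz2
  have hEmeas : MeasurableSet E := by
    rw [hEeq]
    exact measurableSet_ball.inter
      (measurableSet_le hwb.continuous.measurable hub.continuous.measurable)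
  -- replace u, w by their global Lipschitz extensions in the integrals
  have hgradu_eq : ∀ x ∈ B, gradient u x = gradient ub x := by
    intro x hx
    have hfd : fderiv ℝ u x = fderiv ℝ ub x := by
      apply Filter.EventuallyEq.fderiv_eq
      filter_upwards [isOpen_ball.mem_nhds hx] with z hz
      exact huEq (hBsub hz)
    show (InnerProductSpace.toDual ℝ (En N)).symm (fderiv ℝ u x) = _
    rw [hfd]
    rfl
  have hgradw_eq : ∀ x ∈ B, gradient w x = gradient wb x := by
    intro x hx
    have hfd : fderiv ℝ w x = fderiv ℝ wb x := by
      apply Filter.EventuallyEq.fderiv_eq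
      filter_upwards [isOpen_ball.mem_nhds hx] with z hz
      exact hwEq (hBsub hz)
    show (InnerProductSpace.toDual ℝ (En N)).symm (fderiv ℝ w x) = _
    rw [hfd]
    rfl
  have hgoal1 : ∫ x in E, f (gradient w x) = ∫ x in E, f (gradient wb x) :=
    setIntegral_congr_fun hEmeas (fun x hx => by rw [hgradw_eq x (hEB hx)])
  have hgoal2 : ∫ x in E, f (gradient u x) = ∫ x in E, f (gradient ub x) :=
    setIntegral_congr_fun hEmeas (fun x hx => by rw [hgradu_eq x (hEB hx)])
  rw [hgoal1, hgoal2]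
  -- frontier S is nonempty
  have hSfne : (frontier S).Nonempty := by
    rcases Set.eq_empty_or_nonempty (frontier S) with hfe | hfe
    · exfalso
      have h0 : ∀ᵐ x ∂(volume.restrict B), False := by
        filter_upwards [hgradw] with x hx
        rw [hfe] at hx
        exact hx
      rw [ae_iff] at h0
      have h1 : volume.restrict B univ = 0 := by
        convert h0 using 2
        simp
      rw [Measure.restrict_apply_univ] at h1
      exact (measure_ball_pos volume x₀ hρ).ne' h1
    · exact hfe
  have hCne : (closure S).Nonempty := hSfne.mono frontier_subset_closure
  obtain ⟨c, d, hcd1, hcd2⟩ := step1 S hS f hf a b haff hCne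
  -- auxiliary facts
  have hfc : Continuous f :=
    (locallyLipschitzOn_univ.1 (hf.locallyLipschitzOn isOpen_univ)).continuous
  have hgradbound : ∀ (h : En N → ℝ) (K : ℝ≥0), LipschitzWith K h →
      ∀ x, ‖gradient h x‖ ≤ K := by
    intro h K hh x
    show ‖(InnerProductSpace.toDual ℝ (En N)).symm (fderiv ℝ h x)‖ ≤ (K : ℝ)
    rw [LinearIsometryEquiv.norm_map]
    exact norm_fderiv_le_of_lipschitz ℝ hh
  have hGbound : ∀ (h : En N → ℝ) (K : ℝ≥0), LipschitzWith K h →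
      ∀ x, ‖fderiv ℝ h x c‖ ≤ (K : ℝ) * ‖c‖ := by
    intro h K hh x
    calc ‖fderiv ℝ h x c‖ ≤ ‖fderiv ℝ h x‖ * ‖c‖ := (fderiv ℝ h x).le_opNorm c
      _ ≤ (K : ℝ) * ‖c‖ :=
        mul_le_mul_of_nonneg_right (norm_fderiv_le_of_lipschitz ℝ hh) (norm_nonneg c)
  obtain ⟨M, hM⟩ := (isCompact_closedBall (0 : En N) (max (Ku : ℝ) (Kw : ℝ))).exists_bound_of_continuousOn
    hfc.continuousOn
  have hsfin : ∀ s : Set (En N), s ⊆ Metric.closedBall x₀ ρ → volume s < ⊤ :=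
    fun s hs => (measure_mono hs).trans_lt measure_closedBall_lt_top
  have hbddint : ∀ (φ : En N → ℝ) (C : ℝ), AEStronglyMeasurable φ volume →
      (∀ x, ‖φ x‖ ≤ C) → ∀ s : Set (En N), s ⊆ Metric.closedBall x₀ ρ → IntegrableOn φ s := by
    intro φ C hmφ hbφ s hs
    have h2 : IntegrableOn (fun _ : En N => C) s := integrableOn_const (hsfin s hs).ne
    exact Integrable.mono' h2 hmφ.restrict (Eventually.of_forall hbφ)
  have hmeas_fgrad : ∀ h : En N → ℝ, AEStronglyMeasurable (fun x => f (gradient h x)) volume := by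
    intro h
    have h2 : Measurable fun x => gradient h x :=
      (LinearIsometryEquiv.continuous _).measurable.comp (measurable_fderiv ℝ h)
    exact (hfc.measurable.comp h2).aestronglyMeasurable
  have hinner_fderiv : ∀ (h : En N → ℝ) (x : En N),
      (inner ℝ c (gradient h x) : ℝ) = fderiv ℝ h x c := by
    intro h x
    rw [real_inner_comm]
    exact InnerProductSpace.toDual_symm_apply
  -- f composed with gradients: bounds
  have hfw_bd : ∀ x, ‖f (gradient wb x)‖ ≤ M := by
    intro x
    apply hM
    rw [mem_closedBall_zero_iff]
    exact (hgradbound wb Kw hwb x).trans (le_max_right _ _)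
  have hfu_bd : ∀ x, ‖f (gradient ub x)‖ ≤ M := by
    intro x
    apply hM
    rw [mem_closedBall_zero_iff]
    exact (hgradbound ub Ku hub x).trans (le_max_left _ _)
  -- integrability on E
  have hIfw : IntegrableOn (fun x => f (gradient wb x)) E :=
    hbddint _ M (hmeas_fgrad wb) hfw_bd E hEcB
  have hIfu : IntegrableOn (fun x => f (gradient ub x)) E :=
    hbddint _ M (hmeas_fgrad ub) hfu_bd E hEcB
  have hIGw : IntegrableOn (fun x => fderiv ℝ wb x c + d) E := by
    apply hbddint _ ((Kw : ℝ) * ‖c‖ + ‖d‖)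
      ((measurable_fderiv_apply_const ℝ wb c).add_const d).aestronglyMeasurable _ E hEcB
    intro x
    calc ‖fderiv ℝ wb x c + d‖ ≤ ‖fderiv ℝ wb x c‖ + ‖d‖ := norm_add_le _ _
      _ ≤ (Kw : ℝ) * ‖c‖ + ‖d‖ := by linarith [hGbound wb Kw hwb x]
  have hIGu : IntegrableOn (fun x => fderiv ℝ ub x c + d) E := by
    apply hbddint _ ((Ku : ℝ) * ‖c‖ + ‖d‖)
      ((measurable_fderiv_apply_const ℝ ub c).add_const d).aestronglyMeasurable _ E hEcB
    intro x
    calc ‖fderiv ℝ ub x c + d‖ ≤ ‖fderiv ℝ ub x c‖ + ‖d‖ := norm_add_le _ _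
      _ ≤ (Ku : ℝ) * ‖c‖ + ‖d‖ := by linarith [hGbound ub Ku hub x]
  have hIGsub : IntegrableOn (fun x => fderiv ℝ wb x c - fderiv ℝ ub x c) E := by
    apply hbddint _ ((Kw : ℝ) * ‖c‖ + (Ku : ℝ) * ‖c‖)
      (((measurable_fderiv_apply_const ℝ wb c).sub
        (measurable_fderiv_apply_const ℝ ub c)).aestronglyMeasurable) _ E hEcB
    intro x
    calc ‖fderiv ℝ wb x c - fderiv ℝ ub x c‖ ≤ ‖fderiv ℝ wb x c‖ + ‖fderiv ℝ ub x c‖ :=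
        norm_sub_le _ _
      _ ≤ (Kw : ℝ) * ‖c‖ + (Ku : ℝ) * ‖c‖ := by
        linarith [hGbound wb Kw hwb x, hGbound ub Ku hub x]
  -- Step (1): on E, f (∇ wb) = fderiv wb _ c + d a.e.
  have hgradw_mem : ∀ᵐ x ∂volume, x ∈ B → gradient wb x ∈ frontier S := by
    have h3 := (ae_restrict_iff' measurableSet_ball).1 hgradw
    filter_upwards [h3] with x hx hxB
    rw [← hgradw_eq x hxB]
    exact hx hxB
  have e1 : ∫ x in E, f (gradient wb x) = ∫ x in E, (fderiv ℝ wb x c + d) := by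
    apply setIntegral_congr_ae hEmeas
    filter_upwards [hgradw_mem] with x hx hxE
    have h4 : gradient wb x ∈ closure S := frontier_subset_closure (hx (hEB hxE))
    rw [hcd1 _ h4, hinner_fderiv]
  -- Step (2): pointwise lower bound for f (∇ ub)
  have e5 : ∫ x in E, (fderiv ℝ ub x c + d) ≤ ∫ x in E, f (gradient ub x) := by
    apply setIntegral_mono_on hIGu hIfu hEmeas
    intro x hxE
    have h5 := hcd2 (gradient ub x)
    rw [hinner_fderiv] at h5
    exact h5
  -- Step (3): the difference integrates to zero
  set g₀ : En N → ℝ := fun x => wb x - ub x with hg₀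
  have hg₀lip : LipschitzWith (Kw + Ku) g₀ := hwb.sub hub
  set V : En N → ℝ := (Metric.closedBall x₀ ρ).indicator (fun x => min (g₀ x) 0) with hV
  have hVlip : LipschitzWith (Kw + Ku) V := by
    apply lipschitz_zero_ext hg₀lip
    intro x hx
    have hxc : x ∈ Metric.closedBall x₀ ρ := sphere_subset_closedBall hx
    have h5 : u x ≤ w x := hbd x hx
    simp only [hg₀]
    rw [← huEq hxc, ← hwEq hxc]
    linarith
  have hVsupp : ∀ x, x ∉ Metric.closedBall x₀ ρ → V x = 0 :=
    fun x hx => indicator_of_notMem hx _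
  have hsub_ae : ∀ᵐ x ∂volume, fderiv ℝ wb x c - fderiv ℝ ub x c = fderiv ℝ g₀ x c := by
    filter_upwards [hwb.ae_differentiableAt (μ := volume),
      hub.ae_differentiableAt (μ := volume)] with x h1 h2
    have h6 : fderiv ℝ g₀ x = fderiv ℝ wb x - fderiv ℝ ub x := fderiv_sub h1 h2
    rw [h6]
    simp
  set A0 : Set (En N) := {x | g₀ x = 0} with hA0
  have hA0meas : MeasurableSet A0 :=
    (isClosed_eq hg₀lip.continuous continuous_const).measurableSet
  have hE0sub : E ∩ A0 ⊆ {x | V x = 0} := by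
    rintro x ⟨hxE, hx0⟩
    have hxc : x ∈ Metric.closedBall x₀ ρ := hEcB hxE
    simp only [mem_setOf_eq] at hx0 ⊢
    simp only [hV]
    rw [indicator_of_mem hxc, hx0]
    simp
  have hz_g : ∀ᵐ x ∂(volume.restrict (E ∩ A0)), fderiv ℝ g₀ x = 0 :=
    ae_restrict_of_ae_restrict_of_subset inter_subset_right (fderiv_ae_zero_on_zero_set hg₀lip)
  have hz_V : ∀ᵐ x ∂(volume.restrict (E ∩ A0)), fderiv ℝ V x = 0 :=
    ae_restrict_of_ae_restrict_of_subset hE0sub (fderiv_ae_zero_on_zero_set hVlip)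
  have hEneg : ∀ x ∈ E \ A0, fderiv ℝ g₀ x = fderiv ℝ V x := by
    rintro x ⟨hxE, hx0⟩
    have hxB : x ∈ B := hEB hxE
    have hglt : g₀ x < 0 := by
      have h6 : wb x ≤ ub x := (hEeq ▸ hxE).2
      have h7 : g₀ x ≠ 0 := hx0
      simp only [hg₀] at h7 ⊢
      cases lt_or_eq_of_le (by linarith : wb x - ub x ≤ 0) with
      | inl h => exact h
      | inr h => exact absurd h h7
    have hO : IsOpen (B ∩ g₀ ⁻¹' (Iio 0)) :=
      isOpen_ball.inter (isOpen_Iio.preimage hg₀lip.continuous)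
    have hEv : V =ᶠ[𝓝 x] g₀ := by
      filter_upwards [hO.mem_nhds ⟨hxB, hglt⟩] with z hz
      simp only [hV]
      rw [indicator_of_mem (hBsub hz.1)]
      exact min_eq_left (le_of_lt hz.2)
    exact (hEv.fderiv_eq).symm
  -- splitting E
  have hIg0E : IntegrableOn (fun x => fderiv ℝ g₀ x c) E := by
    apply hbddint _ (((Kw + Ku : ℝ≥0) : ℝ) * ‖c‖)
      (measurable_fderiv_apply_const ℝ g₀ c).aestronglyMeasurable _ E hEcB
    exact hGbound g₀ (Kw + Ku) hg₀lip
  have hIVE : IntegrableOn (fun x => fderiv ℝ V x c) E := by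
    apply hbddint _ (((Kw + Ku : ℝ≥0) : ℝ) * ‖c‖)
      (measurable_fderiv_apply_const ℝ V c).aestronglyMeasurable _ E hEcB
    exact hGbound V (Kw + Ku) hVlip
  have hsplit : ∀ φ : En N → ℝ, IntegrableOn φ E volume →
      ∫ x in E, φ x = (∫ x in E \ A0, φ x) + ∫ x in E ∩ A0, φ x := by
    intro φ hφ
    have h10 := setIntegral_union (f := φ) (μ := volume) disjoint_sdiff_inter
      (hEmeas.inter hA0meas) (hφ.mono_set diff_subset) (hφ.mono_set inter_subset_left)
    rw [Set.diff_union_inter] at h10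
    exact h10
  have hsplitg := hsplit _ hIg0E
  have hsplitV := hsplit _ hIVE
  have hTg : ∫ x in E, fderiv ℝ g₀ x c = ∫ x in E, fderiv ℝ V x c := by
    rw [hsplitg, hsplitV]
    congr 1
    · exact setIntegral_congr_fun (hEmeas.diff hA0meas) (fun x hx => by
        show fderiv ℝ g₀ x c = fderiv ℝ V x c
        rw [hEneg x hx])
    · rw [integral_eq_zero_of_ae, integral_eq_zero_of_ae]
      · filter_upwards [hz_V] with x hx
        simp only [Pi.zero_apply]
        rw [hx]
        rfl
      · filter_upwards [hz_g] with x hx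
        simp only [Pi.zero_apply]
        rw [hx]
        rfl
  -- fderiv of V vanishes outside the closed ball
  have hfdV_out : ∀ x : En N, x ∉ Metric.closedBall x₀ ρ → fderiv ℝ V x = 0 := by
    intro x hx
    have hO : IsOpen ((Metric.closedBall x₀ ρ)ᶜ) := Metric.isClosed_closedBall.isOpen_compl
    have hEv : V =ᶠ[𝓝 x] (fun _ => (0 : ℝ)) := by
      filter_upwards [hO.mem_nhds hx] with z hz
      exact hVsupp z hz
    rw [hEv.fderiv_eq]
    exact fderiv_const_apply 0
  have hVbd : ∀ x : En N, ‖fderiv ℝ V x c‖ ≤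
      (Metric.closedBall x₀ ρ).indicator (fun _ => ((Kw + Ku : ℝ≥0) : ℝ) * ‖c‖) x := by
    intro x
    by_cases hx : x ∈ Metric.closedBall x₀ ρ
    · rw [indicator_of_mem hx]
      exact hGbound V (Kw + Ku) hVlip x
    · rw [indicator_of_notMem hx, hfdV_out x hx]
      simp
  have hVint : Integrable (fun x => fderiv ℝ V x c) := by
    apply Integrable.mono' _ (measurable_fderiv_apply_const ℝ V c).aestronglyMeasurable
      (Eventually.of_forall hVbd)
    rw [integrable_indicator_iff measurableSet_closedBall]
    exact integrableOn_const measure_closedBall_lt_top.ne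
  have htot : ∫ x, fderiv ℝ V x c = 0 := integral_fderiv_apply_eq_zero hVlip hρ hVsupp c
  have hae_nsph : ∀ᵐ x : En N ∂volume, x ∉ Metric.sphere x₀ ρ := by
    rw [ae_iff]
    simp only [not_not, Set.setOf_mem_eq]
    exact Measure.addHaar_sphere volume x₀ ρ
  have hcompl : ∫ x in Eᶜ, fderiv ℝ V x c = 0 := by
    refine integral_eq_zero_of_ae ((ae_restrict_iff' hEmeas.compl).2 ?_)
    filter_upwards [hae_nsph] with x hxs hxEc
    by_cases hxB : x ∈ B
    · have h8 : ¬(wb x ≤ ub x) := by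
        intro hle
        exact hxEc (hEeq ▸ (⟨hxB, hle⟩ : x ∈ B ∩ {x | wb x ≤ ub x}))
      have hgpos : 0 < g₀ x := by
        simp only [hg₀]
        linarith [not_le.1 h8]
      have hO : IsOpen (B ∩ g₀ ⁻¹' (Ioi 0)) :=
        isOpen_ball.inter (isOpen_Ioi.preimage hg₀lip.continuous)
      have hEv : V =ᶠ[𝓝 x] (fun _ => (0 : ℝ)) := by
        filter_upwards [hO.mem_nhds ⟨hxB, hgpos⟩] with z hz
        simp only [hV]
        rw [indicator_of_mem (hBsub hz.1)]
        exact min_eq_right (le_of_lt hz.2)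
      rw [hEv.fderiv_eq]
      rw [fderiv_const_apply 0]
      rfl
    · have hxc : x ∉ Metric.closedBall x₀ ρ := by
        rw [← ball_union_sphere]
        rintro (h | h)
        exacts [hxB h, hxs h]
      rw [hfdV_out x hxc]
      rfl
  have hTV : ∫ x in E, fderiv ℝ V x c = 0 := by
    have h9 := integral_add_compl hEmeas hVint
    rw [hcompl, htot] at h9
    linarith
  have hT : ∫ x in E, (fderiv ℝ wb x c - fderiv ℝ ub x c) = 0 := by
    have h9 : ∫ x in E, (fderiv ℝ wb x c - fderiv ℝ ub x c) = ∫ x in E, fderiv ℝ g₀ x c :=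
      setIntegral_congr_ae hEmeas (by filter_upwards [hsub_ae] with x hx _; exact hx)
    rw [h9, hTg, hTV]
  -- final assembly
  have e2 : ∫ x in E, (fderiv ℝ wb x c + d) =
      (∫ x in E, (fderiv ℝ ub x c + d)) + ∫ x in E, (fderiv ℝ wb x c - fderiv ℝ ub x c) := by
    rw [← integral_add hIGu hIGsub]
    apply setIntegral_congr_fun hEmeas
    intro x _
    ring
  linarith [e1, e2, hT, e5]
end
end
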